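/- Let A, B be symmetric positive definite d×d matrices, and suppose A = S* D_A S, B = S* D_B S for an invertible S and diagonal D_A, D_B. Then for 0 < t < 1, the weighted geometric mean satisfies A #_t B = S* (D_A)^{1−t} (D_B)^t S. -/

import Mathlib

open Matrix

/-- `R` is the `t`-th power of `M` in the sense of the spectral functional calculus:
`M = Uᵀ (diagonal e) U` with `U` orthogonal, and `R = Uᵀ (diagonal e^t) U`. -/
def IsRpowOf {d : ℕ} (t : ℝ) (M R : Matrix (Fin d) (Fin d) ℝ) : Prop :=
  ∃ (U : Matrix (Fin d) (Fin d) ℝ) (e : Fin d → ℝ),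
    Uᵀ * U = 1 ∧ (∀ i, 0 < e i) ∧
    M = Uᵀ * Matrix.diagonal e * U ∧
    R = Uᵀ * Matrix.diagonal (fun i => e i ^ t) * U

-- Auxiliary lemmas

lemma wgm_aeval_diag {d : ℕ} (e : Fin d → ℝ) (p : Polynomial ℝ) :
    Polynomial.aeval (Matrix.diagonal e) p = Matrix.diagonal (fun i => p.eval (e i)) := by
  induction p using Polynomial.induction_on' with
  | add p q hp hq => simp [hp, hq, Matrix.diagonal_add]
  | monomial n c =>
      simp [Polynomial.aeval_monomial, Matrix.diagonal_pow,
        Matrix.algebraMap_eq_diagonal, Matrix.diagonal_mul_diagonal, Polynomial.eval_monomial]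

lemma wgm_conj_pow {d : ℕ} (U D : Matrix (Fin d) (Fin d) ℝ) (h1 : Uᵀ * U = 1) (n : ℕ) :
    (Uᵀ * D * U) ^ n = Uᵀ * D ^ n * U := by
  induction n with
  | zero => rw [pow_zero, pow_zero, Matrix.mul_one, h1]
  | succ n ih =>
      rw [pow_succ, ih, pow_succ]
      calc Uᵀ * D ^ n * U * (Uᵀ * D * U) = Uᵀ * D ^ n * (U * Uᵀ) * D * U := by
            simp [Matrix.mul_assoc]
        _ = Uᵀ * (D ^ n * D) * U := by rw [mul_eq_one_comm.mp h1]; simp [Matrix.mul_assoc]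

lemma wgm_aeval_conj {d : ℕ} (U D : Matrix (Fin d) (Fin d) ℝ) (h1 : Uᵀ * U = 1)
    (p : Polynomial ℝ) :
    Polynomial.aeval (Uᵀ * D * U) p = Uᵀ * Polynomial.aeval D p * U := by
  induction p using Polynomial.induction_on' with
  | add p q hp hq => simp [hp, hq, Matrix.mul_add, Matrix.add_mul]
  | monomial n c =>
      rw [Polynomial.aeval_monomial, Polynomial.aeval_monomial, wgm_conj_pow U D h1,
        Algebra.algebraMap_eq_smul_one]
      simp [smul_mul_assoc, mul_smul_comm]

lemma wgm_posDef_conj {d : ℕ} {A : Matrix (Fin d) (Fin d) ℝ} (hA : A.PosDef)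
    (S : Matrix (Fin d) (Fin d) ℝ) (hS : IsUnit S) : (Sᵀ * A * S).PosDef := by
  refine Matrix.PosDef.of_dotProduct_mulVec_pos ?_ ?_
  · have := Matrix.isHermitian_conjTranspose_mul_mul S hA.1
    rwa [Matrix.conjTranspose_eq_transpose_of_trivial] at this
  · intro x hx
    have hdet := (Matrix.isUnit_iff_isUnit_det S).mp hS
    have hx' : S *ᵥ x ≠ 0 := by
      intro h
      apply hx
      have := congrArg (fun y => S⁻¹ *ᵥ y) h
      simpa [Matrix.mulVec_mulVec, Matrix.nonsing_inv_mul S hdet] using this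
    have h2 := hA.dotProduct_mulVec_pos hx'
    convert h2 using 1
    rw [← Matrix.mulVec_mulVec, ← Matrix.mulVec_mulVec, Matrix.dotProduct_mulVec,
      Matrix.vecMul_transpose]
    simp [Matrix.star_mulVec]

lemma wgm_mul_cancel_left {d : ℕ} {X Y : Matrix (Fin d) (Fin d) ℝ} (h : X * Y = 1)
    (Z : Matrix (Fin d) (Fin d) ℝ) : X * (Y * Z) = Z := by
  rw [← Matrix.mul_assoc, h, Matrix.one_mul]

lemma wgm_diag_mul_diag {d : ℕ} (r s : Fin d → ℝ) (X : Matrix (Fin d) (Fin d) ℝ) :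
    Matrix.diagonal r * (Matrix.diagonal s * X) = Matrix.diagonal (fun i => r i * s i) * X := by
  rw [← Matrix.mul_assoc, Matrix.diagonal_mul_diagonal]

/-- If `A = Sᵀ (diagonal a) S` and `B = Sᵀ (diagonal b) S` with `S` invertible, then the
weighted geometric mean `A #_t B = A^{1/2} (A^{-1/2} B A^{-1/2})^t A^{1/2}` equals
`Sᵀ (diagonal a)^{1-t} (diagonal b)^t S`. -/
theorem weighted_geometric_mean_congruence (d : ℕ)
    (A B S : Matrix (Fin d) (Fin d) ℝ) (a b : Fin d → ℝ)
    (hA : A.PosDef) (hB : B.PosDef) (hS : IsUnit S)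
    (hAd : A = Sᵀ * Matrix.diagonal a * S) (hBd : B = Sᵀ * Matrix.diagonal b * S)
    (t : ℝ) (ht0 : 0 < t) (ht1 : t < 1)
    (Asqrt R : Matrix (Fin d) (Fin d) ℝ)
    (hAsqrt : Asqrt.PosDef) (hAsqrt2 : Asqrt * Asqrt = A)
    (hR : IsRpowOf t (Asqrt⁻¹ * B * Asqrt⁻¹) R) :
    Asqrt * R * Asqrt =
      Sᵀ * Matrix.diagonal (fun i => a i ^ (1 - t) * b i ^ t) * S := by
  classical
  obtain ⟨U, e, hU, he, hMU, hRU⟩ := hR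
  -- basic invertibility facts
  have hdetS : IsUnit S.det := (Matrix.isUnit_iff_isUnit_det S).mp hS
  have hS1 : S⁻¹ * S = 1 := Matrix.nonsing_inv_mul S hdetS
  have hS2 : S * S⁻¹ = 1 := Matrix.mul_nonsing_inv S hdetS
  have hQu : IsUnit Asqrt := hAsqrt.isUnit
  have hdQ : IsUnit Asqrt.det := (Matrix.isUnit_iff_isUnit_det _).mp hQu
  have hQ1 : Asqrt⁻¹ * Asqrt = 1 := Matrix.nonsing_inv_mul _ hdQ
  have hQ2 : Asqrt * Asqrt⁻¹ = 1 := Matrix.mul_nonsing_inv _ hdQ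
  have hQsym : Asqrtᵀ = Asqrt := by
    have := hAsqrt.1
    rwa [Matrix.IsHermitian, Matrix.conjTranspose_eq_transpose_of_trivial] at this
  have hQT : (Asqrt⁻¹)ᵀ = Asqrt⁻¹ := by
    rw [Matrix.transpose_nonsing_inv, hQsym]
  have hSiu : IsUnit S⁻¹ := by
    rw [Matrix.isUnit_iff_isUnit_det, Matrix.det_nonsing_inv]
    exact isUnit_ringInverse.mpr hdetS
  have hts : (S⁻¹)ᵀ * Sᵀ = 1 := by rw [← Matrix.transpose_mul, hS2, Matrix.transpose_one]
  -- positivity of a and b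
  have hdiaga : (S⁻¹)ᵀ * A * S⁻¹ = Matrix.diagonal a := by
    rw [hAd]
    simp only [Matrix.mul_assoc]
    rw [hS2, Matrix.mul_one, wgm_mul_cancel_left hts]
  have hdiagb : (S⁻¹)ᵀ * B * S⁻¹ = Matrix.diagonal b := by
    rw [hBd]
    simp only [Matrix.mul_assoc]
    rw [hS2, Matrix.mul_one, wgm_mul_cancel_left hts]
  have ha : ∀ i, 0 < a i := by
    rw [← Matrix.posDef_diagonal_iff, ← hdiaga]
    exact wgm_posDef_conj hA S⁻¹ hSiu
  have hb : ∀ i, 0 < b i := by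
    rw [← Matrix.posDef_diagonal_iff, ← hdiagb]
    exact wgm_posDef_conj hB S⁻¹ hSiu
  set sq : Fin d → ℝ := fun i => Real.sqrt (a i) with hsqdef
  have hsq : ∀ i, sq i * sq i = a i := fun i => Real.mul_self_sqrt (ha i).le
  set C : Matrix (Fin d) (Fin d) ℝ := Asqrt⁻¹ * (Sᵀ * Matrix.diagonal sq) with hCdef
  have hCt : Cᵀ = Matrix.diagonal sq * (S * Asqrt⁻¹) := by
    rw [hCdef]
    simp [Matrix.transpose_mul, Matrix.diagonal_transpose, hQT, Matrix.mul_assoc]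
  -- key congruence identities
  have keyA : ∀ X : Matrix (Fin d) (Fin d) ℝ,
      Sᵀ * (Matrix.diagonal a * (S * X)) = Asqrt * (Asqrt * X) := by
    intro X
    calc Sᵀ * (Matrix.diagonal a * (S * X)) = (Sᵀ * Matrix.diagonal a * S) * X := by
          simp [Matrix.mul_assoc]
      _ = Asqrt * (Asqrt * X) := by rw [← hAd, ← hAsqrt2, Matrix.mul_assoc]
  have keyB : ∀ X : Matrix (Fin d) (Fin d) ℝ,
      Sᵀ * (Matrix.diagonal b * (S * X)) = B * X := by
    intro X
    calc Sᵀ * (Matrix.diagonal b * (S * X)) = (Sᵀ * Matrix.diagonal b * S) * X := by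
          simp [Matrix.mul_assoc]
      _ = B * X := by rw [← hBd]
  have hCCt : C * Cᵀ = 1 := by
    rw [hCt, hCdef]
    simp only [Matrix.mul_assoc]
    rw [wgm_diag_mul_diag]
    have : (fun i => sq i * sq i) = a := funext hsq
    rw [this, keyA, hQ2, Matrix.mul_one, hQ1]
  have hCtC : Cᵀᵀ * Cᵀ = 1 := by rw [Matrix.transpose_transpose, hCCt]
  -- the middle matrix in two spectral forms
  have hMC : Asqrt⁻¹ * B * Asqrt⁻¹ = Cᵀᵀ * Matrix.diagonal (fun i => b i / a i) * Cᵀ := by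
    rw [Matrix.transpose_transpose, hCt, hCdef]
    simp only [Matrix.mul_assoc]
    rw [wgm_diag_mul_diag, wgm_diag_mul_diag]
    have : (fun i => sq i * (b i / a i) * sq i) = b := by
      funext i
      calc sq i * (b i / a i) * sq i = (sq i * sq i) * (b i / a i) := by ring
        _ = a i * (b i / a i) := by rw [hsq i]
        _ = b i := by rw [mul_comm, div_mul_cancel₀ _ (ha i).ne']
    rw [this, keyB]
  -- interpolating polynomial for x ↦ x ^ t
  set s : Finset ℝ :=
    Finset.image e Finset.univ ∪ Finset.image (fun i => b i / a i) Finset.univ with hsdef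
  set p : Polynomial ℝ := Lagrange.interpolate s id (fun x => x ^ t) with hpdef
  have hp : ∀ x ∈ s, Polynomial.eval x p = x ^ t := by
    intro x hx
    have := Lagrange.eval_interpolate_at_node (r := fun x => x ^ t)
      (v := id) (Set.injOn_id _) hx
    exact this
  have heq1 : R = Polynomial.aeval (Asqrt⁻¹ * B * Asqrt⁻¹) p := by
    have hfun : (fun i => Polynomial.eval (e i) p) = fun i => e i ^ t := funext fun i =>
      hp (e i) (Finset.mem_union_left _ (Finset.mem_image_of_mem e (Finset.mem_univ i)))
    rw [hMU, wgm_aeval_conj U _ hU, wgm_aeval_diag, hfun, hRU]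
  have heq2 : Polynomial.aeval (Asqrt⁻¹ * B * Asqrt⁻¹) p
      = C * Matrix.diagonal (fun i => (b i / a i) ^ t) * Cᵀ := by
    have hfun : (fun i => Polynomial.eval (b i / a i) p) = fun i => (b i / a i) ^ t :=
      funext fun i => hp (b i / a i)
        (Finset.mem_union_right _ (Finset.mem_image_of_mem _ (Finset.mem_univ i)))
    rw [hMC, wgm_aeval_conj Cᵀ _ hCtC, wgm_aeval_diag, Matrix.transpose_transpose, hfun]
  -- final computation
  have hpow : ∀ i, sq i * (b i / a i) ^ t * sq i = a i ^ (1 - t) * b i ^ t := by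
    intro i
    have hat : (0:ℝ) < a i ^ t := Real.rpow_pos_of_pos (ha i) t
    calc sq i * (b i / a i) ^ t * sq i = (sq i * sq i) * (b i / a i) ^ t := by ring
      _ = a i * (b i ^ t / a i ^ t) := by rw [hsq i, Real.div_rpow (hb i).le (ha i).le]
      _ = (a i / a i ^ t) * b i ^ t := by ring
      _ = a i ^ (1 - t) * b i ^ t := by rw [Real.rpow_sub (ha i), Real.rpow_one]
  calc Asqrt * R * Asqrt
      = Asqrt * (C * (Matrix.diagonal (fun i => (b i / a i) ^ t) * (Cᵀ * Asqrt))) := by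
        rw [heq1, heq2]; simp only [Matrix.mul_assoc]
    _ = Sᵀ * (Matrix.diagonal sq * (Matrix.diagonal (fun i => (b i / a i) ^ t)
          * (Matrix.diagonal sq * S))) := by
        rw [hCt, hCdef]
        simp only [Matrix.mul_assoc]
        rw [wgm_mul_cancel_left hQ2, hQ1, Matrix.mul_one]
    _ = Sᵀ * Matrix.diagonal (fun i => a i ^ (1 - t) * b i ^ t) * S := by
        rw [wgm_diag_mul_diag, wgm_diag_mul_diag]
        have : (fun i => sq i * (b i / a i) ^ t * sq i)
            = (fun i => a i ^ (1 - t) * b i ^ t) := funext hpow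
        rw [this, Matrix.mul_assoc]
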